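/- For coprime positive integers p, q with 1 ≤ q < p, Dedekind reciprocity holds: s(q,p) + s(p,q) = -1/4 + (p/q + q/p + 1/(pq))/12. -/

import Mathlib

open Classical

/-- The sawtooth function used in Dedekind sums. -/

noncomputable def saw (x : ℝ) : ℝ :=
  if x ∈ Set.range (Int.cast : ℤ → ℝ) then 0 else x - ⌊x⌋ - 1/2

/-- The Dedekind sum `s(q, p)`. -/
noncomputable def dedekindSum (q : ℤ) (p : ℕ) : ℝ :=
  ∑ k ∈ Finset.Icc 1 (p - 1), saw ((k : ℝ) / p) * saw ((k : ℝ) * q / p)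

open Finset

lemma floorNatDiv (a p : ℕ) : ⌊(a:ℝ)/(p:ℝ)⌋ = ((a / p : ℕ) : ℤ) := by
  have h : ((a:ℝ)/(p:ℝ)) = ((((a:ℤ) : ℚ) / ((p:ℕ) : ℚ) : ℚ) : ℝ) := by
    push_cast; ring
  rw [h, Rat.floor_cast, Rat.floor_intCast_div_natCast]
  exact_mod_cast rfl

lemma sawEq (a p : ℕ) (hp : 0 < p) (h : ¬ p ∣ a) :
    saw ((a:ℝ)/(p:ℝ)) = ((a % p : ℕ) : ℝ)/(p:ℝ) - 1/2 := by
  have hnotint : ((a:ℝ)/(p:ℝ)) ∉ Set.range (Int.cast : ℤ → ℝ) := by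
    rintro ⟨z, hz⟩
    have hp0 : (p:ℝ) ≠ 0 := by positivity
    have h1 : (a:ℝ) = z * p := by field_simp at hz; linarith [hz]
    have h2 : (a:ℤ) = z * p := by exact_mod_cast h1
    have : (p:ℤ) ∣ (a:ℤ) := ⟨z, by linarith⟩
    exact h (by exact_mod_cast this)
  rw [saw, if_neg hnotint, floorNatDiv]
  have hp0 : (p:ℝ) ≠ 0 := by positivity
  have key : (a:ℝ) = (p:ℝ) * ((a/p : ℕ):ℝ) + ((a % p : ℕ):ℝ) := by
    exact_mod_cast (Nat.div_add_mod a p).symm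
  rw [Int.cast_natCast]
  rw [key]
  field_simp
  ring

def Mnat (q p : ℕ) : ℕ := ∑ r ∈ Icc 1 (p-1), r * (q * r % p)

lemma notdvd (p q r : ℕ) (hpq : Nat.Coprime p q) (h1 : 1 ≤ r) (h2 : r ≤ p - 1) :
    ¬ p ∣ q * r := by
  intro h
  have : p ∣ r := (Nat.Coprime.dvd_of_dvd_mul_left hpq) h
  have := Nat.le_of_dvd (by omega) this
  omega

lemma sumIccId (n : ℕ) : 2 * ∑ r ∈ Icc 1 n, r = n * (n+1) := by
  induction n with
  | zero => simp
  | succ n ih =>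
    rw [Finset.sum_Icc_succ_top (by omega)]
    ring_nf
    ring_nf at ih
    omega

lemma permSum {M : Type*} [AddCommMonoid M] (p q : ℕ) (hpq : Nat.Coprime p q)
    (f : ℕ → M) :
    ∑ r ∈ Icc 1 (p-1), f (q * r % p) = ∑ r ∈ Icc 1 (p-1), f r := by
  rcases Nat.eq_zero_or_pos p with rfl | hp
  · simp
  have hmap : ∀ r ∈ Icc 1 (p-1), q * r % p ∈ Icc 1 (p-1) := by
    intro r hr
    simp only [mem_Icc] at hr ⊢
    have h1 : q * r % p < p := Nat.mod_lt _ hp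
    have h2 : q * r % p ≠ 0 := by
      intro h0
      exact notdvd p q r hpq hr.1 hr.2 (Nat.dvd_of_mod_eq_zero h0)
    omega
  have hinj : Set.InjOn (fun r => q * r % p) (Icc 1 (p-1)) := by
    intro a ha b hb hab
    simp only [mem_coe, mem_Icc] at ha hb
    simp only at hab
    have h := Nat.ModEq.cancel_left_of_coprime (c := q) (by
        have := hpq.symm; rwa [Nat.Coprime] at this)
        (by unfold Nat.ModEq; exact hab)
    unfold Nat.ModEq at h
    rw [Nat.mod_eq_of_lt (by omega), Nat.mod_eq_of_lt (by omega)] at h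
    exact h
  have himg : (Icc 1 (p-1)).image (fun r => q * r % p) = Icc 1 (p-1) := by
    apply Finset.eq_of_subset_of_card_le
    · intro x hx
      simp only [mem_image] at hx
      obtain ⟨r, hr, rfl⟩ := hx
      exact hmap r hr
    · rw [Finset.card_image_of_injOn hinj]
  conv_rhs => rw [← himg]
  rw [Finset.sum_image (fun a ha b hb => hinj ha hb)]

lemma dedEq (p q : ℕ) (hp : 0 < p) (hpq : Nat.Coprime p q) :
    dedekindSum (q:ℤ) p = (Mnat q p : ℝ)/(p:ℝ)^2 - ((p:ℝ)-1)/4 := by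
  have hp0 : (p:ℝ) ≠ 0 := by positivity
  have hstep : ∀ k ∈ Icc 1 (p-1), saw ((k:ℝ)/p) * saw ((k:ℝ)*((q:ℤ):ℝ)/p) =
      (k:ℝ)*((q*k % p : ℕ):ℝ)/(p:ℝ)^2 - (k:ℝ)/(2*p) - ((q*k%p : ℕ):ℝ)/(2*p) + 1/4 := by
    intro k hk
    simp only [mem_Icc] at hk
    have h1 : ¬ p ∣ k := fun hd => by have := Nat.le_of_dvd (by omega) hd; omega
    have h2 : ¬ p ∣ q*k := notdvd p q k hpq hk.1 hk.2
    have e1 := sawEq k p hp h1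
    have e2 := sawEq (q*k) p hp h2
    rw [Nat.mod_eq_of_lt (by omega)] at e1
    have hc : (k:ℝ) * ((q:ℤ):ℝ) / p = ((q*k : ℕ):ℝ)/p := by push_cast; ring
    rw [hc, e1, e2]
    field_simp
    ring
  rw [dedekindSum, Finset.sum_congr rfl hstep]
  rw [Finset.sum_add_distrib, Finset.sum_sub_distrib, Finset.sum_sub_distrib,
    Finset.sum_const, Nat.card_Icc]
  have hM : ∑ k ∈ Icc 1 (p-1), (k:ℝ)*((q*k % p : ℕ):ℝ)/(p:ℝ)^2
      = (Mnat q p : ℝ)/(p:ℝ)^2 := by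
    rw [← Finset.sum_div, Mnat]
    push_cast
    rfl
  have hperm : ∑ k ∈ Icc 1 (p-1), ((q*k % p : ℕ):ℝ)/(2*(p:ℝ))
      = ∑ k ∈ Icc 1 (p-1), (k:ℝ)/(2*(p:ℝ)) :=
    permSum p q hpq (fun r => (r:ℝ)/(2*(p:ℝ)))
  rw [hM, hperm]
  have hG : 2 * ∑ k ∈ Icc 1 (p-1), (k:ℝ) = ((p:ℝ)-1)*(p:ℝ) := by
    have h1 := congrArg (fun n : ℕ => (n:ℝ)) (sumIccId (p-1))
    simp only [Nat.cast_mul, Nat.cast_ofNat, Nat.cast_sum] at h1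
    push_cast [Nat.cast_sub hp] at h1
    rw [h1]; ring
  have hcard : p - 1 + 1 - 1 = p - 1 := by omega
  rw [hcard, nsmul_eq_mul, Nat.cast_sub hp, ← Finset.sum_div]
  push_cast
  set G := ∑ k ∈ Icc 1 (p-1), (k:ℝ) with hGdef
  field_simp
  linear_combination (-4*(p:ℝ)) * hG

lemma sumIccSq (n : ℕ) : 6 * ∑ r ∈ Icc 1 n, r^2 = n * (n+1) * (2*n+1) := by
  induction n with
  | zero => simp
  | succ n ih =>
    rw [Finset.sum_Icc_succ_top (by omega)]
    ring_nf; ring_nf at ih; nlinarith [ih]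


-- divisor identity
lemma h3nat (p q : ℕ) :
    q * ∑ r ∈ Icc 1 (p-1), r^2
      = p * ∑ r ∈ Icc 1 (p-1), r * (q*r/p) + Mnat q p := by
  rw [Mnat, Finset.mul_sum, Finset.mul_sum, ← Finset.sum_add_distrib]
  apply Finset.sum_congr rfl
  intro r _
  have hdm : p * (q*r/p) + q*r % p = q*r := Nat.div_add_mod (q*r) p
  calc q * r^2 = r * (p * (q*r/p) + q*r % p) := by rw [hdm]; ring
  _ = p * (r * (q*r/p)) + r * (q*r % p) := by ring

-- the filter lemma
lemma filt (p q : ℕ) (hq : 0 < q) (hpq : Nat.Coprime p q) (r : ℕ)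
    (hr : r ∈ Icc 1 (p-1)) :
    (Icc 1 (q-1)).filter (fun s => p*s < q*r) = Icc 1 (q*r/p) := by
  simp only [mem_Icc] at hr
  have hp : 0 < p := by omega
  ext s
  simp only [mem_filter, mem_Icc]
  constructor
  · rintro ⟨⟨hs1, hs2⟩, hlt⟩
    refine ⟨hs1, ?_⟩
    rw [Nat.le_div_iff_mul_le hp, mul_comm]
    omega
  · rintro ⟨hs1, hs2⟩
    have hle : s * p ≤ q * r := (Nat.le_div_iff_mul_le hp).1 hs2
    have hne : p * s ≠ q * r := by
      intro he
      exact notdvd p q r hpq hr.1 hr.2 ⟨s, he.symm⟩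
    have hle2 : p*s ≤ q*r := by rwa [mul_comm p s]
    have hdivlt : q*r/p < q := by
      rw [Nat.div_lt_iff_lt_mul hp]
      have hrp : r < p := by omega
      calc q*r < q*p := mul_lt_mul_of_pos_left hrp hq
      _ = q*p := rfl
    refine ⟨⟨hs1, by omega⟩, by omega⟩

-- lattice double counting
lemma lattice (p q : ℕ) (hq : 0 < q) (hqp : q < p) (hpq : Nat.Coprime p q) :
    2 * (∑ r ∈ Icc 1 (p-1), r * (q*r/p))
      + ∑ s ∈ Icc 1 (q-1), ((p*s/q)^2 + (p*s/q))
    = 2 * ((q-1) * ∑ r ∈ Icc 1 (p-1), r) := by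
  have hp : 0 < p := by omega
  have hne : ∀ r ∈ Icc 1 (p-1), ∀ s ∈ Icc 1 (q-1), p*s ≠ q*r := by
    intro r hr s hs he
    simp only [mem_Icc] at hr
    exact notdvd p q r hpq hr.1 hr.2 ⟨s, he.symm⟩
  -- double sum split
  have hsplit : (q-1) * ∑ r ∈ Icc 1 (p-1), r
      = (∑ r ∈ Icc 1 (p-1), ∑ s ∈ Icc 1 (q-1), if p*s < q*r then r else 0)
      + (∑ r ∈ Icc 1 (p-1), ∑ s ∈ Icc 1 (q-1), if q*r < p*s then r else 0) := by
    rw [← Finset.sum_add_distrib, Finset.mul_sum]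
    apply Finset.sum_congr rfl
    intro r hr
    rw [← Finset.sum_add_distrib]
    have : ∀ s ∈ Icc 1 (q-1),
        ((if p*s < q*r then r else 0) + (if q*r < p*s then r else 0)) = r := by
      intro s hs
      have := hne r hr s hs
      rcases lt_trichotomy (p*s) (q*r) with h | h | h
      · rw [if_pos h, if_neg (by omega)]; omega
      · omega
      · rw [if_neg (by omega), if_pos h]; omega
    rw [Finset.sum_congr rfl this, Finset.sum_const, Nat.card_Icc]
    simp [mul_comm]
  have hA : ∀ r ∈ Icc 1 (p-1),
      (∑ s ∈ Icc 1 (q-1), if p*s < q*r then r else 0) = r * (q*r/p) := by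
    intro r hr
    rw [← Finset.sum_filter, filt p q hq hpq r hr, Finset.sum_const, Nat.card_Icc,
      smul_eq_mul]
    rw [Nat.add_sub_cancel, mul_comm]
  have hB : (∑ r ∈ Icc 1 (p-1), ∑ s ∈ Icc 1 (q-1), if q*r < p*s then r else 0)
      = ∑ s ∈ Icc 1 (q-1), ∑ r ∈ Icc 1 (p*s/q), r := by
    rw [Finset.sum_comm]
    apply Finset.sum_congr rfl
    intro s hs
    rw [← Finset.sum_filter]
    congr 1
    have hqp1 : Nat.Coprime q p := hpq.symm
    have := filt q p hp hqp1 s hs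
    simpa using this
  rw [Finset.sum_congr rfl hA] at hsplit
  rw [hB] at hsplit
  have h2B : 2 * ∑ s ∈ Icc 1 (q-1), ∑ r ∈ Icc 1 (p*s/q), r
      = ∑ s ∈ Icc 1 (q-1), ((p*s/q)^2 + (p*s/q)) := by
    rw [Finset.mul_sum]
    apply Finset.sum_congr rfl
    intro s _
    rw [sumIccId]
    ring
  calc 2 * (∑ r ∈ Icc 1 (p-1), r * (q*r/p))
      + ∑ s ∈ Icc 1 (q-1), ((p*s/q)^2 + (p*s/q))
      = 2 * (∑ r ∈ Icc 1 (p-1), r * (q*r/p))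
        + 2 * ∑ s ∈ Icc 1 (q-1), ∑ r ∈ Icc 1 (p*s/q), r := by rw [h2B]
    _ = 2 * ((q-1) * ∑ r ∈ Icc 1 (p-1), r) := by rw [hsplit]; ring

lemma h5nat (p q : ℕ) (hpq : Nat.Coprime p q) :
    q * (∑ s ∈ Icc 1 (q-1), p*s/q) + ∑ s ∈ Icc 1 (q-1), s
      = p * ∑ s ∈ Icc 1 (q-1), s := by
  have hperm : ∑ s ∈ Icc 1 (q-1), (p*s % q) = ∑ s ∈ Icc 1 (q-1), s :=
    permSum q p hpq.symm (fun x => x)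
  conv_lhs => rw [← hperm]
  rw [Finset.mul_sum, Finset.mul_sum, ← Finset.sum_add_distrib]
  apply Finset.sum_congr rfl
  intro s _
  exact Nat.div_add_mod (p*s) q

lemma h6nat (p q : ℕ) (hpq : Nat.Coprime p q) :
    q^2 * (∑ s ∈ Icc 1 (q-1), (p*s/q)^2) + 2*(p * Mnat p q)
      = p^2 * (∑ s ∈ Icc 1 (q-1), s^2) + ∑ s ∈ Icc 1 (q-1), s^2 := by
  have hperm : ∑ s ∈ Icc 1 (q-1), (p*s % q)^2 = ∑ s ∈ Icc 1 (q-1), s^2 :=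
    permSum q p hpq.symm (fun x => x^2)
  have main : ∀ s ∈ Icc 1 (q-1),
      q^2*(p*s/q)^2 + 2*(p*(s*(p*s%q))) = p^2*s^2 + (p*s%q)^2 := by
    intro s _
    have hdm : q * (p*s/q) + p*s % q = p*s := Nat.div_add_mod (p*s) q
    have h1 : 2*(p*(s*(p*s % q))) = 2*((q*(p*s/q) + p*s % q)*(p*s % q)) := by
      rw [hdm]; ring
    have h2 : p^2*s^2 = (q*(p*s/q) + p*s % q)^2 := by rw [hdm]; ring
    rw [h1, h2]; ring
  calc q^2 * (∑ s ∈ Icc 1 (q-1), (p*s/q)^2) + 2*(p * Mnat p q)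
      = ∑ s ∈ Icc 1 (q-1), (q^2*(p*s/q)^2 + 2*(p*(s*(p*s%q)))) := by
        rw [Mnat, Finset.mul_sum, Finset.mul_sum, Finset.mul_sum,
          ← Finset.sum_add_distrib]
    _ = ∑ s ∈ Icc 1 (q-1), (p^2*s^2 + (p*s%q)^2) := Finset.sum_congr rfl main
    _ = ∑ s ∈ Icc 1 (q-1), p^2*s^2 + ∑ s ∈ Icc 1 (q-1), (p*s%q)^2 :=
        Finset.sum_add_distrib
    _ = p^2 * (∑ s ∈ Icc 1 (q-1), s^2) + ∑ s ∈ Icc 1 (q-1), s^2 := by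
        rw [← Finset.mul_sum, hperm]

lemma keyInt (p q : ℕ) (hq : 1 ≤ q) (hqp : q < p) (hpq : Nat.Coprime p q) :
    12*(q:ℤ)^2*(Mnat q p : ℤ) + 12*(p:ℤ)^2*(Mnat p q : ℤ)
      = 3*(p:ℤ)^2*(q:ℤ)^2*((p:ℤ)+(q:ℤ)-3) + (p:ℤ)*(q:ℤ)*((p:ℤ)^2+(q:ℤ)^2+1) := by
  have hp : 0 < p := by omega
  -- cast all the nat identities to ℤ
  have cast1 : ∀ {a b : ℕ}, a = b → (a:ℤ) = (b:ℤ) := fun h => by exact_mod_cast h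
  have e1 := cast1 (sumIccId (p-1))
  have e1' := cast1 (sumIccId (q-1))
  have e2 := cast1 (sumIccSq (p-1))
  have e2' := cast1 (sumIccSq (q-1))
  have e3 := cast1 (h3nat p q)
  have l4 := lattice p q hq hqp hpq
  rw [Finset.sum_add_distrib] at l4
  have e4 := cast1 l4
  have l6 := h6nat p q hpq
  have e6' := cast1 l6
  have e5 := cast1 (h5nat p q hpq)
  have e6 := cast1 (h6nat p q hpq)
  push_cast [Nat.cast_sub hp, Nat.cast_sub hq] at e1 e1' e2 e2' e3 e4 e5 e6
  linear_combination (-12*(q:ℤ)^2)*e3 + (-6*(p:ℤ)*(q:ℤ)^2)*e4 + (6*(p:ℤ)*(q:ℤ))*e5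
    + (6*(p:ℤ))*e6 + (-6*(p:ℤ)*(q:ℤ)^2*((q:ℤ)-1))*e1 + (3*(p:ℤ)*(q:ℤ)*((p:ℤ)-1))*e1'
    + (2*(q:ℤ)^3)*e2 + ((p:ℤ)*((p:ℤ)^2+1))*e2'

theorem dedekind_reciprocity (p q : ℕ) (hq : 1 ≤ q) (hqp : q < p)
    (hpq : Nat.Coprime p q) :
    dedekindSum (q : ℤ) p + dedekindSum (p : ℤ) q =
      -1/4 + ((p : ℝ) / q + (q : ℝ) / p + 1 / ((p : ℝ) * q)) / 12 := by
  have hp : 0 < p := by omega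
  rw [dedEq p q hp hpq, dedEq q p (by omega) hpq.symm]
  have key := keyInt p q hq hqp hpq
  have keyR : 12*(q:ℝ)^2*(Mnat q p : ℝ) + 12*(p:ℝ)^2*(Mnat p q : ℝ)
      = 3*(p:ℝ)^2*(q:ℝ)^2*((p:ℝ)+(q:ℝ)-3) + (p:ℝ)*(q:ℝ)*((p:ℝ)^2+(q:ℝ)^2+1) := by
    exact_mod_cast key
  have hp0 : (p:ℝ) ≠ 0 := by positivity
  have hq0 : (q:ℝ) ≠ 0 := by positivity
  field_simp
  linear_combination (4:ℝ) * keyR
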